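/- Let p, q ∈ (1, ∞) satisfy 1/p + 1/3 = 1 + 1/q. Then there exists a constant N_p > 0, depending only on p, such that for every f ∈ L^p(ℝ³), the convolution of f with the kernel x ↦ 1/|x| satisfies ‖ (1/|·|) * f ‖_{L^q(ℝ³)} ≤ N_p ‖f‖_{L^p(ℝ³)}. -/

import Mathlib

open MeasureTheory

noncomputable section

local notation "E3" => EuclideanSpace ℝ (Fin 3)

open Metric Set ENNReal

namespace HLS

/-- volume of the unit ball -/
def c0 : ℝ≥0∞ := volume (ball (0:E3) 1)

lemma c0_pos : 0 < c0 := measure_ball_pos _ _ one_pos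
lemma c0_ne_top : c0 ≠ ∞ := measure_ball_lt_top.ne

lemma vol_ball (x : E3) {r : ℝ} (hr : 0 ≤ r) :
    volume (ball x r) = ENNReal.ofReal (r^3) * c0 := by
  rw [Measure.addHaar_ball _ _ hr]; norm_num [finrank_euclideanSpace_fin, c0]

lemma vol_ball_pos (x : E3) {r : ℝ} (hr : 0 < r) : 0 < volume (ball x r) :=
  measure_ball_pos _ _ hr

lemma vol_ball_ne_top (x : E3) (r : ℝ) : volume (ball x r) ≠ ∞ := measure_ball_lt_top.ne

/-- Hardy–Littlewood maximal function (rational radii). -/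
def maxFn (g : E3 → ℝ≥0∞) (x : E3) : ℝ≥0∞ :=
  ⨆ r : {q : ℚ // 0 < q}, (volume (ball x (r.1:ℝ)))⁻¹ * ∫⁻ y in ball x (r.1:ℝ), g y

lemma measurable_setLintegral_ball {g : E3 → ℝ≥0∞} (hg : Measurable g) (r : ℝ) :
    Measurable fun x : E3 => ∫⁻ y in ball x r, g y := by
  have : ∀ x : E3, ∫⁻ y in ball x r, g y
      = ∫⁻ y, ({ z : E3 × E3 | dist z.1 z.2 < r }.indicator (fun z => g z.2)) (x, y) := by
    intro x
    rw [← lintegral_indicator measurableSet_ball]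
    congr 1
    ext y
    by_cases h : y ∈ ball x r
    · rw [Set.indicator_of_mem h, Set.indicator_of_mem]
      exact mem_ball'.mp h
    · rw [Set.indicator_of_notMem h, Set.indicator_of_notMem]
      intro hy; exact h (mem_ball'.mpr hy)
  simp only [this]
  apply Measurable.lintegral_prod_right'
  exact (hg.comp measurable_snd).indicator
    (measurableSet_lt (by fun_prop) measurable_const)

lemma measurable_maxFn {g : E3 → ℝ≥0∞} (hg : Measurable g) : Measurable (maxFn g) := by
  apply Measurable.iSup
  intro r
  have hrpos : (0:ℝ) < (r.1:ℝ) := by exact_mod_cast r.2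
  have hconst : (fun x : E3 => (volume (ball x (r.1:ℝ)))⁻¹ * ∫⁻ y in ball x (r.1:ℝ), g y)
      = fun x : E3 => (ENNReal.ofReal ((r.1:ℝ)^3) * c0)⁻¹ * ∫⁻ y in ball x (r.1:ℝ), g y := by
    funext x; rw [vol_ball x hrpos.le]
  rw [hconst]
  exact (measurable_setLintegral_ball hg _).const_mul _

/-- every ball average (real radius) is controlled by the maximal function -/
lemma setLintegral_ball_le_maxFn (g : E3 → ℝ≥0∞) (x : E3) {r : ℝ} (hr : 0 < r) :
    ∫⁻ y in ball x r, g y ≤ 8 * volume (ball x r) * maxFn g x := by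
  obtain ⟨s, hs1, hs2⟩ := exists_rat_btwn (show r < 2*r by linarith)
  have hs0 : (0:ℝ) < (s:ℝ) := lt_trans hr hs1
  have hs0' : (0:ℚ) < s := by exact_mod_cast hs0
  have hvol : volume (ball x (s:ℝ)) ≤ 8 * volume (ball x r) := by
    rw [vol_ball x hs0.le, vol_ball x hr.le, ← mul_assoc]
    apply mul_le_mul_left
    rw [← ENNReal.ofReal_ofNat, ← ENNReal.ofReal_mul (by norm_num)]
    apply ENNReal.ofReal_le_ofReal
    calc (s:ℝ)^3 ≤ (2*r)^3 := by
          apply pow_le_pow_left₀ hs0.le (by linarith)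
      _ = 8 * r^3 := by ring
  have havg : (volume (ball x (s:ℝ)))⁻¹ * ∫⁻ y in ball x (s:ℝ), g y ≤ maxFn g x :=
    le_iSup (fun t : {q : ℚ // 0 < q} =>
      (volume (ball x (t.1:ℝ)))⁻¹ * ∫⁻ y in ball x (t.1:ℝ), g y) ⟨s, hs0'⟩
  have hne0 : volume (ball x (s:ℝ)) ≠ 0 := (vol_ball_pos x hs0).ne'
  have hnetop : volume (ball x (s:ℝ)) ≠ ∞ := vol_ball_ne_top x _
  calc ∫⁻ y in ball x r, g y ≤ ∫⁻ y in ball x (s:ℝ), g y :=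
        lintegral_mono_set (ball_subset_ball hs1.le)
    _ = volume (ball x (s:ℝ)) * ((volume (ball x (s:ℝ)))⁻¹ * ∫⁻ y in ball x (s:ℝ), g y) := by
        rw [← mul_assoc, ENNReal.mul_inv_cancel hne0 hnetop, one_mul]
    _ ≤ volume (ball x (s:ℝ)) * maxFn g x := mul_le_mul_right havg _
    _ ≤ 8 * volume (ball x r) * maxFn g x := mul_le_mul_left hvol _


/-- Weak (1,1) inequality for the maximal function. -/
lemma weak11 (g : E3 → ℝ≥0∞) {t : ℝ≥0∞} (ht0 : t ≠ 0) (httop : t ≠ ∞) :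
    t * volume {x : E3 | t < maxFn g x} ≤ 125 * ∫⁻ y, g y := by
  by_cases hI : (∫⁻ y, g y) = ∞
  · rw [hI]; simp
  set I := ∫⁻ y, g y with hIdef
  set S := {x : E3 | t < maxFn g x} with hS
  -- radius bound
  set V : ℝ≥0∞ := I / (t * c0) with hV
  have hVtop : V ≠ ∞ := by
    rw [hV]
    exact (ENNReal.div_lt_top hI (by simp [ht0, c0_pos.ne'])).ne
  set R0 : ℝ := max 1 V.toReal with hR0
  -- choose radii
  have key : ∀ x ∈ S, ∃ rr : ℝ, 0 < rr ∧ rr ≤ R0 ∧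
      t * volume (ball x rr) < ∫⁻ y in ball x rr, g y := by
    intro x hx
    rw [hS, mem_setOf_eq, maxFn, lt_iSup_iff] at hx
    obtain ⟨r, hr⟩ := hx
    have hr0 : (0:ℝ) < (r.1:ℝ) := by exact_mod_cast r.2
    have hne0 : volume (ball x (r.1:ℝ)) ≠ 0 := (vol_ball_pos x hr0).ne'
    have hnetop : volume (ball x (r.1:ℝ)) ≠ ∞ := vol_ball_ne_top x _
    have hlt : t * volume (ball x (r.1:ℝ)) < ∫⁻ y in ball x (r.1:ℝ), g y := by
      calc t * volume (ball x (r.1:ℝ))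
          < ((volume (ball x (r.1:ℝ)))⁻¹ * ∫⁻ y in ball x (r.1:ℝ), g y)
            * volume (ball x (r.1:ℝ)) :=
            ENNReal.mul_lt_mul_left hne0 hnetop hr
        _ = ∫⁻ y in ball x (r.1:ℝ), g y := by
            rw [mul_comm, ← mul_assoc, ENNReal.mul_inv_cancel hne0 hnetop, one_mul]
    refine ⟨(r.1:ℝ), hr0, ?_, hlt⟩
    have hle : t * volume (ball x (r.1:ℝ)) ≤ I :=
      le_trans hlt.le (setLIntegral_le_lintegral _ _)
    rw [vol_ball x hr0.le] at hle
    have hV' : ENNReal.ofReal ((r.1:ℝ)^3) ≤ V := by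
      rw [hV, ENNReal.le_div_iff_mul_le (Or.inl (by simp [ht0, c0_pos.ne']))
        (Or.inl (ENNReal.mul_ne_top httop c0_ne_top))]
      calc ENNReal.ofReal ((r.1:ℝ)^3) * (t * c0)
          = t * (ENNReal.ofReal ((r.1:ℝ)^3) * c0) := by ring
        _ ≤ I := hle
    have h3 : ((r.1:ℝ))^3 ≤ V.toReal := by
      have := ENNReal.toReal_mono hVtop hV'
      rwa [ENNReal.toReal_ofReal (by positivity)] at this
    rcases le_or_gt (r.1:ℝ) 1 with h | h
    · exact le_trans h (le_max_left _ _)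
    · have : (r.1:ℝ) ≤ ((r.1:ℝ))^3 := by nlinarith [sq_nonneg ((r.1:ℝ) - 1), sq_nonneg (r.1:ℝ), mul_pos hr0 hr0]
      exact le_trans (le_trans this h3) (le_max_right _ _)
  choose! rf hrf0 hrfR0 hrfint using key
  -- Vitali
  obtain ⟨u, huS, hdisj, hcov⟩ :=
    Vitali.exists_disjoint_subfamily_covering_enlargement_closedBall S id rf R0 hrfR0 4
      (by norm_num)
  -- u countable
  have hucnt : u.Countable := by
    have hmeas : ∀ b : ↥u, MeasurableSet (closedBall (b:E3) (rf b)) :=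
      fun b => measurableSet_closedBall
    have hpw : Pairwise (Function.onFun Disjoint fun b : ↥u => closedBall (b:E3) (rf b)) := by
      intro a b hab
      exact hdisj a.2 b.2 (Subtype.coe_injective.ne hab)
    have := Measure.countable_meas_pos_of_disjoint_iUnion (μ := volume) hmeas hpw
    have hall : {i : ↥u | 0 < volume (closedBall (i:E3) (rf i))} = univ := by
      ext i; simp only [mem_setOf_eq, mem_univ, iff_true]
      exact measure_closedBall_pos volume _ (hrf0 _ (huS i.2))
    rw [hall] at this
    haveI : Countable ↥u := by
      have := this.to_subtype
      exact Function.Surjective.countable (f := fun i : ↥(univ : Set ↥u) => (i : ↥u))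
        (fun b => ⟨⟨b, mem_univ _⟩, rfl⟩)
    exact Set.countable_coe_iff.mpr ‹Countable ↥u›
  -- covering by 5r balls
  have hScov : S ⊆ ⋃ b ∈ u, ball b (5 * rf b) := by
    intro a ha
    obtain ⟨b, hbu, hball⟩ := hcov a ha
    have hb0 : 0 < rf b := hrf0 b (huS hbu)
    have : a ∈ closedBall (id a) (rf a) := mem_closedBall_self (hrf0 a ha).le
    have h2 : a ∈ closedBall (id b) (4 * rf b) := hball this
    refine mem_biUnion hbu ?_
    simp only [id] at h2
    rw [mem_closedBall] at h2
    rw [mem_ball]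
    linarith
  haveI : Countable ↥u := hucnt.to_subtype
  calc t * volume S ≤ t * volume (⋃ b ∈ u, ball b (5 * rf b)) :=
        mul_le_mul_right (measure_mono hScov) t
    _ ≤ t * ∑' b : ↥u, volume (ball (b:E3) (5 * rf b)) :=
        mul_le_mul_right (measure_biUnion_le _ hucnt _) t
    _ = ∑' b : ↥u, t * volume (ball (b:E3) (5 * rf b)) := ENNReal.tsum_mul_left.symm
    _ ≤ ∑' b : ↥u, 125 * (t * volume (ball (b:E3) (rf b))) := by
        apply ENNReal.tsum_le_tsum
        intro b
        have hb0 : 0 < rf b := hrf0 b (huS b.2)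
        rw [vol_ball _ (by positivity), vol_ball _ hb0.le]
        have : ENNReal.ofReal ((5 * rf b)^3) = 125 * ENNReal.ofReal ((rf b)^3) := by
          rw [show (5 * rf b)^3 = 125 * (rf b)^3 by ring,
            ENNReal.ofReal_mul (by norm_num)]
          norm_num
        rw [this]
        ring_nf
        exact le_refl _
    _ = 125 * ∑' b : ↥u, t * volume (ball (b:E3) (rf b)) := ENNReal.tsum_mul_left
    _ ≤ 125 * ∑' b : ↥u, ∫⁻ y in ball (b:E3) (rf b), g y := by
        apply mul_le_mul_right
        exact ENNReal.tsum_le_tsum fun b => (hrfint b (huS b.2)).le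
    _ = 125 * ∫⁻ y in ⋃ b : ↥u, ball (b:E3) (rf b), g y := by
        rw [lintegral_iUnion (fun b => measurableSet_ball)]
        intro a b hab
        exact Disjoint.mono ball_subset_closedBall ball_subset_closedBall
          (hdisj a.2 b.2 (Subtype.coe_injective.ne hab))
    _ ≤ 125 * ∫⁻ y, g y := mul_le_mul_right (setLIntegral_le_lintegral _ _) _

/-- basic rpow integral over (0, c) -/
lemma lint_Ioo_rpow {r : ℝ} (hr : -1 < r) {c : ℝ} (hc : 0 ≤ c) :
    ∫⁻ t in Ioo (0:ℝ) c, ENNReal.ofReal (t^r) = ENNReal.ofReal (c^(r+1) / (r+1)) := by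
  have hint : IntegrableOn (fun t : ℝ => t^r) (Ioo 0 c) volume :=
    (intervalIntegrable_iff_integrableOn_Ioo_of_le hc).mp
      (intervalIntegral.intervalIntegrable_rpow' hr)
  have hnn : 0 ≤ᵐ[volume.restrict (Ioo (0:ℝ) c)] fun t : ℝ => t^r := by
    rw [Filter.EventuallyLE, ae_restrict_iff' measurableSet_Ioo]
    filter_upwards with t ht
    exact Real.rpow_nonneg ht.1.le r
  rw [← ofReal_integral_eq_lintegral_ofReal hint hnn]
  congr 1
  rw [← integral_Ioc_eq_integral_Ioo, ← intervalIntegral.integral_of_le hc,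
    integral_rpow (Or.inl hr), Real.zero_rpow (by linarith)]
  ring

/-- divergence of the rpow integral over (0, ∞) -/
lemma lint_Ioi_rpow_top (r : ℝ) :
    ∫⁻ t in Ioi (0:ℝ), ENNReal.ofReal (t^r) = ∞ := by
  by_contra h
  apply not_integrableOn_Ioi_rpow r
  constructor
  · exact (Measurable.aestronglyMeasurable (by fun_prop))
  · rw [hasFiniteIntegral_iff_norm]
    have : ∫⁻ t in Ioi (0:ℝ), ENNReal.ofReal ‖t^r‖ = ∫⁻ t in Ioi (0:ℝ), ENNReal.ofReal (t^r) := by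
      apply setLIntegral_congr_fun measurableSet_Ioi
      intro t ht
      dsimp only
      rw [Real.norm_eq_abs, abs_of_nonneg (Real.rpow_nonneg ht.le r)]
    rw [this]
    exact lt_top_iff_ne_top.mpr h

/-- Key rpow integral with an ENNReal cutoff. -/
lemma lint_rpow_cutoff {r : ℝ} (hr : -1 < r) (a : ℝ≥0∞) :
    ∫⁻ t in Ioi (0:ℝ), (if ENNReal.ofReal t < a then ENNReal.ofReal (t^r) else 0)
      = a^(r+1) / ENNReal.ofReal (r+1) := by
  have hr1 : (0:ℝ) < r + 1 := by linarith
  rcases eq_or_ne a ∞ with rfl | ha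
  · have : ∫⁻ t in Ioi (0:ℝ), (if ENNReal.ofReal t < (∞:ℝ≥0∞) then ENNReal.ofReal (t^r) else 0)
        = ∫⁻ t in Ioi (0:ℝ), ENNReal.ofReal (t^r) := by
      apply setLIntegral_congr_fun measurableSet_Ioi
      intro t _
      dsimp only
      rw [if_pos ENNReal.ofReal_lt_top]
    rw [this, lint_Ioi_rpow_top, ENNReal.top_rpow_of_pos hr1, ENNReal.top_div_of_ne_top (by simp)]
  · set c : ℝ := a.toReal with hcdef
    have hc : 0 ≤ c := ENNReal.toReal_nonneg
    have hac : a = ENNReal.ofReal c := by rw [hcdef, ENNReal.ofReal_toReal ha]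
    have hcond : ∀ t ∈ Ioi (0:ℝ), (if ENNReal.ofReal t < a then ENNReal.ofReal (t^r) else 0)
        = (Ioo (0:ℝ) c).indicator (fun s => ENNReal.ofReal (s^r)) t := by
      intro t ht
      rw [hac]
      by_cases htc : t < c
      · rw [if_pos, Set.indicator_of_mem (Set.mem_Ioo.mpr ⟨ht, htc⟩)]
        exact (ENNReal.ofReal_lt_ofReal_iff (lt_of_le_of_lt (le_of_lt ht) htc)).mpr htc
      · rw [if_neg, Set.indicator_of_notMem (fun hmem => htc hmem.2)]
        intro hlt
        exact htc (lt_of_lt_of_le ((ENNReal.ofReal_lt_ofReal_iff_of_nonneg (le_of_lt ht)).mp hlt)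
          le_rfl)
    rw [setLIntegral_congr_fun measurableSet_Ioi
      hcond]
    rw [lintegral_indicator measurableSet_Ioo, Measure.restrict_restrict measurableSet_Ioo]
    have : Ioo (0:ℝ) c ∩ Ioi 0 = Ioo 0 c := inter_eq_self_of_subset_left Ioo_subset_Ioi_self
    rw [this, lint_Ioo_rpow hr hc, hac, ENNReal.ofReal_div_of_pos hr1]
    congr 1
    rcases eq_or_lt_of_le hc with hc0 | hc0
    · rw [← hc0]
      simp [Real.zero_rpow hr1.ne', ENNReal.zero_rpow_of_pos hr1]
    · rw [ENNReal.ofReal_rpow_of_pos hc0]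

/-- Layer cake representation for `ℝ≥0∞`-valued functions. -/
lemma layercake {α : Type*} [MeasurableSpace α] (μ : Measure α) [SFinite μ]
    {F : α → ℝ≥0∞} (hF : Measurable F) {p : ℝ} (hp : 0 < p) :
    ∫⁻ x, F x ^ p ∂μ
      = ∫⁻ t in Ioi (0:ℝ), μ {x | ENNReal.ofReal t < F x} * ENNReal.ofReal (p * t^(p-1)) := by
  have hpt : ENNReal.ofReal p ≠ ∞ := ofReal_ne_top
  have hp0 : ENNReal.ofReal p ≠ 0 := by
    simp [ENNReal.ofReal_eq_zero, not_le, hp]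
  have hpw : ∀ a : ℝ≥0∞, a ^ p
      = ∫⁻ t in Ioi (0:ℝ), (if ENNReal.ofReal t < a then ENNReal.ofReal (p * t^(p-1)) else 0) := by
    intro a
    have h1 : ∀ t : ℝ, (if ENNReal.ofReal t < a then ENNReal.ofReal (p * t^(p-1)) else 0)
        = ENNReal.ofReal p * (if ENNReal.ofReal t < a then ENNReal.ofReal (t^(p-1)) else 0) := by
      intro t; by_cases h : ENNReal.ofReal t < a <;>
        simp [h, ENNReal.ofReal_mul hp.le]
    simp_rw [h1]
    rw [lintegral_const_mul' _ _ hpt, lint_rpow_cutoff (by linarith) a,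
      show p - 1 + 1 = p by ring]
    exact (ENNReal.mul_div_cancel hp0 hpt).symm
  simp_rw [hpw]
  rw [lintegral_lintegral_swap]
  · apply setLIntegral_congr_fun measurableSet_Ioi
    intro t _
    have : ∀ x, (if ENNReal.ofReal t < F x then ENNReal.ofReal (p * t^(p-1)) else 0)
        = {x | ENNReal.ofReal t < F x}.indicator
            (fun _ => ENNReal.ofReal (p * t^(p-1))) x := by
      intro x; rw [Set.indicator_apply]; rfl
    simp_rw [this]
    rw [lintegral_indicator (measurableSet_lt measurable_const hF), setLIntegral_const,
      mul_comm]
  · apply Measurable.aemeasurable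
    apply Measurable.ite
    · exact measurableSet_lt (by fun_prop) (hF.comp measurable_fst)
    · fun_prop
    · exact measurable_const

/-- Sublinearity of the maximal function against a constant addition. -/
lemma maxFn_le_add (g : E3 → ℝ≥0∞) {c : ℝ≥0∞} (hc : c ≠ ∞) (x : E3) :
    maxFn g x ≤ maxFn (fun y => if c < g y then g y else 0) x + c := by
  set G : E3 → ℝ≥0∞ := fun y => if c < g y then g y else 0 with hG
  apply iSup_le
  intro r
  have hr0 : (0:ℝ) < (r.1:ℝ) := by exact_mod_cast r.2
  have hne0 : volume (ball x (r.1:ℝ)) ≠ 0 := (vol_ball_pos x hr0).ne'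
  have hnetop : volume (ball x (r.1:ℝ)) ≠ ∞ := vol_ball_ne_top x _
  have hpt : ∀ y, g y ≤ G y + c := by
    intro y
    by_cases h : c < g y
    · simp only [hG, if_pos h]; exact le_self_add
    · simp only [hG, if_neg h]; simpa using (not_lt.mp h)
  calc (volume (ball x (r.1:ℝ)))⁻¹ * ∫⁻ y in ball x (r.1:ℝ), g y
      ≤ (volume (ball x (r.1:ℝ)))⁻¹ * ∫⁻ y in ball x (r.1:ℝ), (G y + c) :=
        mul_le_mul_right (lintegral_mono hpt) _
    _ = (volume (ball x (r.1:ℝ)))⁻¹ * ((∫⁻ y in ball x (r.1:ℝ), G y)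
          + c * volume (ball x (r.1:ℝ))) := by
        rw [lintegral_add_right _ measurable_const, setLIntegral_const]
    _ = (volume (ball x (r.1:ℝ)))⁻¹ * (∫⁻ y in ball x (r.1:ℝ), G y)
          + (volume (ball x (r.1:ℝ)))⁻¹ * (c * volume (ball x (r.1:ℝ))) := by
        rw [mul_add]
    _ ≤ maxFn G x + c := by
        apply add_le_add
        · exact le_iSup (fun t : {q : ℚ // 0 < q} =>
            (volume (ball x (t.1:ℝ)))⁻¹ * ∫⁻ y in ball x (t.1:ℝ), G y) r
        · rw [mul_comm c, ← mul_assoc, ENNReal.inv_mul_cancel hne0 hnetop, one_mul]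

def Kp (p : ℝ) : ℝ≥0∞ :=
  125 * ENNReal.ofReal (2*p) * (ENNReal.ofReal (p-1))⁻¹ * (2:ℝ≥0∞)^(p-1)

lemma Kp_ne_top {p : ℝ} (hp1 : 1 < p) : Kp p ≠ ∞ := by
  have h1 : (ENNReal.ofReal (p-1))⁻¹ ≠ ∞ := by
    rw [Ne, ENNReal.inv_eq_top]
    simp [ENNReal.ofReal_eq_zero, not_le]
    linarith
  have h2 : (2:ℝ≥0∞)^(p-1) ≠ ∞ := by
    apply ENNReal.rpow_ne_top_of_nonneg (by linarith)
    norm_num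
  exact ENNReal.mul_ne_top (ENNReal.mul_ne_top (ENNReal.mul_ne_top (by norm_num) ofReal_ne_top) h1) h2

/-- Strong (p,p) bound for the maximal function. -/
lemma lintegral_maxFn_rpow_le (g : E3 → ℝ≥0∞) (hg : Measurable g) {p : ℝ} (hp1 : 1 < p) :
    ∫⁻ x, maxFn g x ^ p ≤ Kp p * ∫⁻ x, g x ^ p := by
  have hp0 : (0:ℝ) < p := by linarith
  rw [layercake volume (measurable_maxFn hg) hp0]
  set G : ℝ → E3 → ℝ≥0∞ := fun t y => if ENNReal.ofReal (t/2) < g y then g y else 0 with hGdef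
  have step1 : ∀ t ∈ Ioi (0:ℝ),
      volume {x : E3 | ENNReal.ofReal t < maxFn g x} * ENNReal.ofReal (p * t^(p-1))
        ≤ 125 * ∫⁻ x, ENNReal.ofReal (2*p*t^(p-2)) * G t x := by
    intro t ht
    have ht2 : (0:ℝ) < t/2 := by simpa using (half_pos (show (0:ℝ) < t from ht))
    have hc0 : ENNReal.ofReal (t/2) ≠ 0 := by
      simp [ENNReal.ofReal_eq_zero, not_le, ht2]
    have hsubset : {x : E3 | ENNReal.ofReal t < maxFn g x}
        ⊆ {x : E3 | ENNReal.ofReal (t/2) < maxFn (G t) x} := by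
      intro x hx
      rw [mem_setOf_eq] at hx ⊢
      by_contra hcon
      push_neg at hcon
      have := maxFn_le_add g (c := ENNReal.ofReal (t/2)) ofReal_ne_top x
      have hle : maxFn g x ≤ ENNReal.ofReal (t/2) + ENNReal.ofReal (t/2) :=
        le_trans this (add_le_add_left hcon _)
      rw [← ENNReal.ofReal_add ht2.le ht2.le] at hle
      rw [show t/2 + t/2 = t by ring] at hle
      exact absurd (lt_of_lt_of_le hx hle) (lt_irrefl _)
    have hweak := weak11 (G t) hc0 ofReal_ne_top
    have hvol : volume {x : E3 | ENNReal.ofReal t < maxFn g x}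
        ≤ (125 * ∫⁻ y, G t y) / ENNReal.ofReal (t/2) := by
      rw [ENNReal.le_div_iff_mul_le (Or.inl hc0) (Or.inl ofReal_ne_top)]
      calc volume {x : E3 | ENNReal.ofReal t < maxFn g x} * ENNReal.ofReal (t/2)
          ≤ volume {x : E3 | ENNReal.ofReal (t/2) < maxFn (G t) x} * ENNReal.ofReal (t/2) :=
            mul_le_mul_left (measure_mono hsubset) _
        _ = ENNReal.ofReal (t/2) * volume {x : E3 | ENNReal.ofReal (t/2) < maxFn (G t) x} :=
            mul_comm _ _
        _ ≤ 125 * ∫⁻ y, G t y := hweak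
    calc volume {x : E3 | ENNReal.ofReal t < maxFn g x} * ENNReal.ofReal (p * t^(p-1))
        ≤ ((125 * ∫⁻ y, G t y) / ENNReal.ofReal (t/2)) * ENNReal.ofReal (p * t^(p-1)) :=
          mul_le_mul_left hvol _
      _ = 125 * ENNReal.ofReal (2*p*t^(p-2)) * ∫⁻ y, G t y := by
          have ht' : (0:ℝ) < t := ht
          rw [div_eq_mul_inv, ← ENNReal.ofReal_inv_of_pos ht2, mul_assoc,
            ← ENNReal.ofReal_mul (by positivity)]
          have h3 : t^(p-2) = t^(p-1) * t⁻¹ := by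
            rw [show p-2 = (p-1) + (-1) by ring, Real.rpow_add ht', Real.rpow_neg_one]
          have hid : (t/2)⁻¹ * (p * t^(p-1)) = 2*p*t^(p-2) := by
            rw [h3]
            field_simp
          rw [hid]
          ring
      _ = 125 * ∫⁻ x, ENNReal.ofReal (2*p*t^(p-2)) * G t x := by
          rw [mul_assoc]
          congr 1
          rw [lintegral_const_mul' _ _ ofReal_ne_top]
  calc ∫⁻ t in Ioi (0:ℝ), volume {x : E3 | ENNReal.ofReal t < maxFn g x}
          * ENNReal.ofReal (p * t^(p-1))
      ≤ ∫⁻ t in Ioi (0:ℝ), 125 * ∫⁻ x, ENNReal.ofReal (2*p*t^(p-2)) * G t x :=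
        setLIntegral_mono' measurableSet_Ioi step1
    _ = 125 * ∫⁻ t in Ioi (0:ℝ), ∫⁻ x, ENNReal.ofReal (2*p*t^(p-2)) * G t x :=
        lintegral_const_mul' _ _ (by norm_num)
    _ = 125 * ∫⁻ x, ∫⁻ t in Ioi (0:ℝ), ENNReal.ofReal (2*p*t^(p-2)) * G t x := by
        congr 1
        apply lintegral_lintegral_swap
        apply Measurable.aemeasurable
        apply Measurable.mul
        · fun_prop
        · apply Measurable.ite
          · exact measurableSet_lt (by fun_prop) (hg.comp measurable_snd)
          · exact hg.comp measurable_snd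
          · exact measurable_const
    _ ≤ 125 * ∫⁻ x, (ENNReal.ofReal (2*p) * (ENNReal.ofReal (p-1))⁻¹ * (2:ℝ≥0∞)^(p-1))
          * g x ^ p := by
        apply mul_le_mul_right
        apply lintegral_mono
        intro x
        -- inner integral computation
        have hcond : ∀ t ∈ Ioi (0:ℝ), ENNReal.ofReal (2*p*t^(p-2)) * G t x
            = (ENNReal.ofReal (2*p) * g x) * (if ENNReal.ofReal t < 2 * g x
                then ENNReal.ofReal (t^(p-2)) else 0) := by
          intro t ht
          have hiff : (ENNReal.ofReal (t/2) < g x) ↔ (ENNReal.ofReal t < 2 * g x) := by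
            have h2 : ENNReal.ofReal t = 2 * ENNReal.ofReal (t/2) := by
              rw [← ENNReal.ofReal_ofNat, ← ENNReal.ofReal_mul (by norm_num)]
              congr 1
              ring
            rw [h2, ENNReal.mul_lt_mul_iff_right (by norm_num) (by norm_num)]
          simp only [hGdef]
          by_cases h : ENNReal.ofReal (t/2) < g x
          · rw [if_pos h, if_pos (hiff.mp h), ENNReal.ofReal_mul (by positivity)]
            ring
          · rw [if_neg h, if_neg (fun hh => h (hiff.mpr hh))]
            simp
        show (∫⁻ t in Ioi (0:ℝ), ENNReal.ofReal (2*p*t^(p-2)) * G t x)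
            ≤ (ENNReal.ofReal (2*p) * (ENNReal.ofReal (p-1))⁻¹ * (2:ℝ≥0∞)^(p-1)) * g x ^ p
        rw [setLIntegral_congr_fun measurableSet_Ioi hcond]
        have hgp : g x * g x ^ (p-1) = g x ^ p := by
          have h := ENNReal.rpow_add_of_nonneg (x := g x) 1 (p-1) zero_le_one (by linarith)
          rw [ENNReal.rpow_one] at h
          rw [← h, show (1:ℝ) + (p-1) = p by ring]
        by_cases hgx : g x = ∞
        · -- RHS is infinite
          have htop : (ENNReal.ofReal (2*p) * (ENNReal.ofReal (p-1))⁻¹ * (2:ℝ≥0∞)^(p-1))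
              * g x ^ p = ∞ := by
            rw [hgx, ENNReal.top_rpow_of_pos hp0, ENNReal.mul_top]
            intro hzero
            rcases mul_eq_zero.mp hzero with h | h
            · rcases mul_eq_zero.mp h with h' | h'
              · rw [ENNReal.ofReal_eq_zero] at h'; linarith
              · rw [ENNReal.inv_eq_zero] at h'; exact ofReal_ne_top h'
            · rw [ENNReal.rpow_eq_zero_iff] at h
              rcases h with ⟨h', _⟩ | ⟨h', _⟩ <;> simp at h'
          exact htop ▸ le_top
        · apply le_of_eq
          rw [lintegral_const_mul' _ _
            (ENNReal.mul_ne_top ofReal_ne_top hgx)]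
          rw [lint_rpow_cutoff (by linarith) (2 * g x)]
          rw [show p - 2 + 1 = p - 1 by ring]
          rw [ENNReal.mul_rpow_of_nonneg _ _ (by linarith : (0:ℝ) ≤ p - 1)]
          rw [div_eq_mul_inv]
          calc (ENNReal.ofReal (2*p) * g x)
                * ((2:ℝ≥0∞)^(p-1) * (g x)^(p-1) * (ENNReal.ofReal (p-1))⁻¹)
              = (ENNReal.ofReal (2*p) * (ENNReal.ofReal (p-1))⁻¹ * (2:ℝ≥0∞)^(p-1))
                * (g x * g x^(p-1)) := by ring
            _ = (ENNReal.ofReal (2*p) * (ENNReal.ofReal (p-1))⁻¹ * (2:ℝ≥0∞)^(p-1))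
                * g x ^ p := by rw [hgp]
    _ = Kp p * ∫⁻ x, g x ^ p := by
        have h2pow : (2:ℝ≥0∞)^(p-1) ≠ ⊤ :=
          ENNReal.rpow_ne_top_of_nonneg (by linarith) (by norm_num)
        have hinv : (ENNReal.ofReal (p-1))⁻¹ ≠ ⊤ := by
          rw [Ne, ENNReal.inv_eq_top]
          simp only [ENNReal.ofReal_eq_zero, not_le]
          linarith
        have hC : ENNReal.ofReal (2*p) * (ENNReal.ofReal (p-1))⁻¹ * (2:ℝ≥0∞)^(p-1) ≠ ∞ :=
          ENNReal.mul_ne_top (ENNReal.mul_ne_top ofReal_ne_top hinv) h2pow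
        rw [lintegral_const_mul' _ _ hC, Kp]
        ring


/-- kernel -/
def ker (x y : E3) : ℝ≥0∞ := ((‖x - y‖₊ : ℝ≥0∞))⁻¹

lemma ker_eq (x y : E3) : ker x y = (ENNReal.ofReal (dist x y))⁻¹ := by
  rw [ker, dist_eq_norm, ← ENNReal.ofReal_coe_nnreal, coe_nnnorm]

lemma measurable_ker (x : E3) : Measurable fun y : E3 => ker x y := by
  apply Measurable.inv
  exact (measurable_const.sub measurable_id).nnnorm.coe_nnreal_ennreal

lemma ker_le {x y : E3} {d : ℝ} (hd : 0 < d) (h : d ≤ dist x y) :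
    ker x y ≤ ENNReal.ofReal d⁻¹ := by
  rw [ker_eq, ENNReal.ofReal_inv_of_pos hd]
  exact ENNReal.inv_le_inv.mpr (ENNReal.ofReal_le_ofReal h)

/-- Near part estimate. -/
lemma near_bound (g : E3 → ℝ≥0∞) (x : E3) {R : ℝ} (hR : 0 < R) :
    ∫⁻ y in ball x R, g y * ker x y
      ≤ 32 * c0 * ENNReal.ofReal (R^2) * maxFn g x := by
  set A : ℕ → Set E3 := fun k => ball x (R/2^k) \ ball x (R/2^(k+1)) with hA
  have hsub : ball x R ⊆ (⋃ k, A k) ∪ {x} := by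
    intro y hy
    rcases eq_or_ne y x with rfl | hyx
    · exact Or.inr rfl
    · left
      have hd : 0 < dist y x := dist_pos.mpr hyx
      have hex : ∃ k : ℕ, R/2^(k+1) ≤ dist y x := by
        obtain ⟨n, hn⟩ := pow_unbounded_of_one_lt (R / dist y x) (one_lt_two (α := ℝ))
        refine ⟨n, ?_⟩
        rw [div_le_iff₀ (by positivity)]
        rw [div_lt_iff₀ hd] at hn
        have h1 : (2:ℝ)^n ≤ 2^(n+1) := by
          apply pow_le_pow_right₀ (by norm_num) (Nat.le_succ n)
        nlinarith [mul_le_mul_of_nonneg_right h1 hd.le]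
      have hk1 : R/2^(Nat.find hex + 1) ≤ dist y x := Nat.find_spec hex
      have hk2 : dist y x < R/2^(Nat.find hex) := by
        rcases Nat.eq_zero_or_pos (Nat.find hex) with h0 | h0
        · rw [h0]; simpa using (mem_ball.mp hy)
        · obtain ⟨m, hm⟩ : ∃ m, Nat.find hex = m + 1 := ⟨Nat.find hex - 1, by omega⟩
          have hmin := Nat.find_min hex (show m < Nat.find hex by omega)
          push_neg at hmin
          rw [hm]
          exact hmin
      refine mem_iUnion.mpr ⟨Nat.find hex, ?_⟩
      constructor
      · rw [mem_ball]; exact hk2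
      · rw [mem_ball]; push_neg; exact hk1
  calc ∫⁻ y in ball x R, g y * ker x y
      ≤ ∫⁻ y in (⋃ k, A k) ∪ {x}, g y * ker x y := lintegral_mono_set hsub
    _ ≤ (∫⁻ y in ⋃ k, A k, g y * ker x y) + ∫⁻ y in {x}, g y * ker x y :=
        lintegral_union_le _ _ _
    _ = ∫⁻ y in ⋃ k, A k, g y * ker x y := by
        rw [setLIntegral_measure_zero _ _ (measure_singleton x), add_zero]
    _ ≤ ∑' k : ℕ, ∫⁻ y in A k, g y * ker x y := lintegral_iUnion_le _ _
    _ ≤ ∑' k : ℕ, 16 * c0 * ENNReal.ofReal (R^2) * maxFn g x * ENNReal.ofReal ((1/4)^k) := by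
        apply ENNReal.tsum_le_tsum
        intro k
        have h2k : (0:ℝ) < 2^k := by positivity
        have hRk : (0:ℝ) < R/2^k := by positivity
        have hRk1 : (0:ℝ) < R/2^(k+1) := by positivity
        have hker : ∀ y ∈ A k, g y * ker x y ≤ g y * ENNReal.ofReal (2^(k+1)/R) := by
          intro y hy
          apply mul_le_mul_right
          have hge : R/2^(k+1) ≤ dist x y := by
            rw [dist_comm]
            have := hy.2
            rw [mem_ball] at this
            push_neg at this
            exact this
          have := ker_le hRk1 hge
          rwa [show (R/2^(k+1))⁻¹ = 2^(k+1)/R by field_simp] at this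
        calc ∫⁻ y in A k, g y * ker x y
            ≤ ∫⁻ y in A k, g y * ENNReal.ofReal (2^(k+1)/R) :=
              setLIntegral_mono' (measurableSet_ball.diff measurableSet_ball) hker
          _ = ENNReal.ofReal (2^(k+1)/R) * ∫⁻ y in A k, g y := by
              rw [← lintegral_const_mul' _ _ ofReal_ne_top]
              apply lintegral_congr
              intro y
              exact mul_comm _ _
          _ ≤ ENNReal.ofReal (2^(k+1)/R) * ∫⁻ y in ball x (R/2^k), g y := by
              apply mul_le_mul_right
              exact lintegral_mono_set diff_subset
          _ ≤ ENNReal.ofReal (2^(k+1)/R) * (8 * volume (ball x (R/2^k)) * maxFn g x) :=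
              mul_le_mul_right (setLintegral_ball_le_maxFn g x hRk) _
          _ = 16 * c0 * ENNReal.ofReal (R^2) * maxFn g x * ENNReal.ofReal ((1/4)^k) := by
              rw [vol_ball x hRk.le]
              have e1 : ENNReal.ofReal (2^(k+1)/R) * ((8:ℝ≥0∞) * ENNReal.ofReal ((R/2^k)^3))
                  = (16:ℝ≥0∞) * ENNReal.ofReal (R^2) * ENNReal.ofReal ((1/4)^k) := by
                rw [show (8:ℝ≥0∞) = ENNReal.ofReal 8 by norm_num,
                  show (16:ℝ≥0∞) = ENNReal.ofReal 16 by norm_num,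
                  ← ENNReal.ofReal_mul (by norm_num : (0:ℝ) ≤ 8),
                  ← ENNReal.ofReal_mul (by positivity),
                  ← ENNReal.ofReal_mul (by norm_num : (0:ℝ) ≤ 16),
                  ← ENNReal.ofReal_mul (by positivity)]
                congr 1
                rw [pow_succ,
                  show ((1:ℝ)/4)^k = 1/(2^k*2^k) by
                    rw [div_pow, one_pow, ← mul_pow]; norm_num]
                field_simp
                ring
              calc ENNReal.ofReal (2^(k+1)/R) * (8 * (ENNReal.ofReal ((R/2^k)^3) * c0) * maxFn g x)
                  = (ENNReal.ofReal (2^(k+1)/R) * ((8:ℝ≥0∞) * ENNReal.ofReal ((R/2^k)^3)))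
                      * c0 * maxFn g x := by ring
                _ = ((16:ℝ≥0∞) * ENNReal.ofReal (R^2) * ENNReal.ofReal ((1/4)^k))
                      * c0 * maxFn g x := by rw [e1]
                _ = 16 * c0 * ENNReal.ofReal (R^2) * maxFn g x * ENNReal.ofReal ((1/4)^k) := by
                      ring
    _ ≤ 32 * c0 * ENNReal.ofReal (R^2) * maxFn g x := by
        rw [ENNReal.tsum_mul_left]
        have hgeo : (∑' k : ℕ, ENNReal.ofReal ((1/4:ℝ)^k)) ≤ 2 := by
          have : ∀ k : ℕ, ENNReal.ofReal ((1/4:ℝ)^k) = (ENNReal.ofReal (1/4))^k := by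
            intro k; rw [← ENNReal.ofReal_pow (by norm_num)]
          simp_rw [this]
          rw [ENNReal.tsum_geometric]
          have h34 : (1:ℝ≥0∞) - ENNReal.ofReal (1/4) = ENNReal.ofReal (3/4) := by
            rw [← ENNReal.ofReal_one, ← ENNReal.ofReal_sub _ (by norm_num)]
            norm_num
          rw [h34, ← ENNReal.ofReal_inv_of_pos (by norm_num)]
          rw [show (2:ℝ≥0∞) = ENNReal.ofReal 2 by norm_num]
          apply ENNReal.ofReal_le_ofReal
          norm_num
        calc 16 * c0 * ENNReal.ofReal (R^2) * maxFn g x * ∑' k : ℕ, ENNReal.ofReal ((1/4:ℝ)^k)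
            ≤ 16 * c0 * ENNReal.ofReal (R^2) * maxFn g x * 2 := mul_le_mul_right hgeo _
          _ = 32 * c0 * ENNReal.ofReal (R^2) * maxFn g x := by ring


/-- Tail estimate for the kernel raised to a power `s > 3`. -/
lemma tail_bound (x : E3) {R : ℝ} (hR : 0 < R) {s : ℝ} (hs : 3 < s) :
    ∫⁻ y in (ball x R)ᶜ, (ker x y)^s
      ≤ 8 * c0 * (1 - ENNReal.ofReal ((2:ℝ)^(3-s)))⁻¹ * ENNReal.ofReal (R^(3-s)) := by
  set B : ℕ → Set E3 := fun k => ball x (R*2^(k+1)) \ ball x (R*2^k) with hB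
  have hsub : (ball x R)ᶜ ⊆ ⋃ k, B k := by
    intro y hy
    have hd : R ≤ dist y x := by
      simp only [mem_compl_iff, mem_ball, not_lt] at hy
      exact hy
    have hd0 : 0 < dist y x := lt_of_lt_of_le hR hd
    have hex : ∃ k : ℕ, dist y x < R * 2^(k+1) := by
      obtain ⟨n, hn⟩ := pow_unbounded_of_one_lt (dist y x / R) (one_lt_two (α := ℝ))
      refine ⟨n, ?_⟩
      rw [div_lt_iff₀ hR] at hn
      have h1 : (2:ℝ)^n ≤ 2^(n+1) := pow_le_pow_right₀ (by norm_num) (Nat.le_succ n)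
      nlinarith
    have hk2 : dist y x < R * 2^(Nat.find hex + 1) := Nat.find_spec hex
    have hk1 : R * 2^(Nat.find hex) ≤ dist y x := by
      rcases Nat.eq_zero_or_pos (Nat.find hex) with h0 | h0
      · rw [h0]; simpa using hd
      · obtain ⟨m, hm⟩ : ∃ m, Nat.find hex = m + 1 := ⟨Nat.find hex - 1, by omega⟩
        have hmin := Nat.find_min hex (show m < Nat.find hex by omega)
        push_neg at hmin
        rw [hm]; exact hmin
    refine mem_iUnion.mpr ⟨Nat.find hex, ?_⟩
    refine ⟨mem_ball.mpr hk2, ?_⟩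
    rw [mem_ball]
    push_neg
    exact hk1
  calc ∫⁻ y in (ball x R)ᶜ, (ker x y)^s
      ≤ ∫⁻ y in ⋃ k, B k, (ker x y)^s := lintegral_mono_set hsub
    _ ≤ ∑' k : ℕ, ∫⁻ y in B k, (ker x y)^s := lintegral_iUnion_le _ _
    _ ≤ ∑' k : ℕ, (8 * c0 * ENNReal.ofReal (R^(3-s))) * (ENNReal.ofReal ((2:ℝ)^(3-s)))^k := by
        apply ENNReal.tsum_le_tsum
        intro k
        set b : ℝ := (2:ℝ)^k with hbdef
        have hb : (0:ℝ) < b := by positivity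
        have hRk : (0:ℝ) < R*b := by positivity
        have hker : ∀ y ∈ B k, (ker x y)^s ≤ ENNReal.ofReal (((R*b)⁻¹)^s) := by
          intro y hy
          have hge : R*b ≤ dist x y := by
            rw [dist_comm]
            have := hy.2
            rw [mem_ball] at this
            push_neg at this
            exact this
          calc (ker x y)^s ≤ (ENNReal.ofReal ((R*b)⁻¹))^s :=
                ENNReal.rpow_le_rpow (ker_le hRk hge) (by linarith)
            _ = ENNReal.ofReal (((R*b)⁻¹)^s) :=
                ENNReal.ofReal_rpow_of_pos (by positivity)
        have key : ((R*b)⁻¹)^s * (R*(b*2))^3 = 8 * R^(3-s) * ((2:ℝ)^(3-s))^k := by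
          have hRs : (0:ℝ) < R^s := Real.rpow_pos_of_pos hR s
          have hbs : (0:ℝ) < b^s := Real.rpow_pos_of_pos hb s
          have lhs1 : ((R*b)⁻¹)^s = (R^s * b^s)⁻¹ := by
            rw [Real.inv_rpow (by positivity), Real.mul_rpow hR.le hb.le]
          have hR3 : (R:ℝ)^(3:ℕ) = R^(3:ℝ) := by
            rw [← Real.rpow_natCast R 3]; norm_num
          have hb3 : (b:ℝ)^(3:ℕ) = b^(3:ℝ) := by
            rw [← Real.rpow_natCast b 3]; norm_num
          have hRdiv : R^(3:ℝ) / R^s = R^(3-s) := (Real.rpow_sub hR 3 s).symm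
          have hbdiv : b^(3:ℝ) / b^s = b^((3:ℝ)-s) := (Real.rpow_sub hb 3 s).symm
          have hbfin : b^((3:ℝ)-s) = ((2:ℝ)^((3:ℝ)-s))^k := by
            rw [hbdef, ← Real.rpow_natCast (2:ℝ) k, ← Real.rpow_mul (by norm_num),
              ← Real.rpow_natCast ((2:ℝ)^((3:ℝ)-s)) k, ← Real.rpow_mul (by norm_num)]
            ring_nf
          have expand : (R*(b*2))^3 = R^(3:ℕ) * b^(3:ℕ) * 8 := by ring
          rw [lhs1, expand, hR3, hb3]
          rw [show (R^(3:ℝ) * b^(3:ℝ) * 8) = 8 * (R^(3:ℝ) * b^(3:ℝ)) by ring]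
          rw [show ((R^s * b^s)⁻¹ * (8 * (R^(3:ℝ) * b^(3:ℝ)))) =
            8 * (R^(3:ℝ)/R^s) * (b^(3:ℝ)/b^s) by field_simp]
          rw [hRdiv, hbdiv, hbfin]
        calc ∫⁻ y in B k, (ker x y)^s
            ≤ ∫⁻ y in B k, ENNReal.ofReal (((R*b)⁻¹)^s) :=
              setLIntegral_mono' (measurableSet_ball.diff measurableSet_ball) hker
          _ = ENNReal.ofReal (((R*b)⁻¹)^s) * volume (B k) := setLIntegral_const _ _
          _ ≤ ENNReal.ofReal (((R*b)⁻¹)^s) * volume (ball x (R*2^(k+1))) :=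
              mul_le_mul_right (measure_mono diff_subset) _
          _ = (8 * c0 * ENNReal.ofReal (R^(3-s))) * (ENNReal.ofReal ((2:ℝ)^(3-s)))^k := by
              rw [vol_ball x (by positivity)]
              rw [show R*2^(k+1) = R*(b*2) by rw [hbdef]; ring]
              rw [← mul_assoc, ← ENNReal.ofReal_mul (by positivity), key]
              rw [show (8:ℝ≥0∞) = ENNReal.ofReal 8 by norm_num]
              rw [ENNReal.ofReal_mul (by positivity), ENNReal.ofReal_mul (by norm_num),
                ENNReal.ofReal_pow (by positivity)]
              ring
    _ = 8 * c0 * (1 - ENNReal.ofReal ((2:ℝ)^(3-s)))⁻¹ * ENNReal.ofReal (R^(3-s)) := by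
        rw [ENNReal.tsum_mul_left, ENNReal.tsum_geometric]
        ring

/-- Hölder estimate for the far part. -/
lemma far_bound (g : E3 → ℝ≥0∞) (hg : Measurable g) (x : E3) {R : ℝ} (hR : 0 < R)
    {p p' : ℝ} (hpq : p.HolderConjugate p') (hp'3 : 3 < p') :
    ∫⁻ y in (ball x R)ᶜ, g y * ker x y
      ≤ (∫⁻ y, g y ^ p)^(1/p) *
        (8 * c0 * (1 - ENNReal.ofReal ((2:ℝ)^(3-p')))⁻¹ * ENNReal.ofReal (R^(3-p')))^(1/p') := by
  have hind : ∫⁻ y in (ball x R)ᶜ, g y * ker x y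
      = ∫⁻ y, (g * fun y => ((ball x R)ᶜ.indicator (ker x) y)) y := by
    rw [← lintegral_indicator measurableSet_ball.compl]
    apply lintegral_congr
    intro y
    by_cases h : y ∈ (ball x R)ᶜ
    · simp [Set.indicator_of_mem h]
    · simp [Set.indicator_of_notMem h]
  rw [hind]
  calc ∫⁻ y, (g * fun y => ((ball x R)ᶜ.indicator (ker x) y)) y
      ≤ (∫⁻ y, g y ^ p)^(1/p)
        * (∫⁻ y, ((ball x R)ᶜ.indicator (ker x) y) ^ p')^(1/p') :=
        ENNReal.lintegral_mul_le_Lp_mul_Lq volume hpq hg.aemeasurable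
          ((measurable_ker x).indicator measurableSet_ball.compl).aemeasurable
    _ ≤ _ := by
        apply mul_le_mul_right
        apply ENNReal.rpow_le_rpow _ (by positivity)
        have : ∀ y, ((ball x R)ᶜ.indicator (ker x) y) ^ p'
            = (ball x R)ᶜ.indicator (fun y => (ker x y)^p') y := by
          intro y
          by_cases h : y ∈ (ball x R)ᶜ
          · simp [Set.indicator_of_mem h]
          · simp [Set.indicator_of_notMem h,
              ENNReal.zero_rpow_of_pos (lt_trans (by norm_num) hpq.symm.lt)]
        simp_rw [this]
        rw [lintegral_indicator measurableSet_ball.compl]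
        exact tail_bound x hR hp'3

lemma maxFn_ne_zero (g : E3 → ℝ≥0∞) (hg : Measurable g) {p : ℝ} (hp0 : 0 < p)
    (h : ∫⁻ y, g y ^ p ≠ 0) (x : E3) : maxFn g x ≠ 0 := by
  intro h0
  apply h
  have hball : ∀ r : {q : ℚ // 0 < q}, ∫⁻ y in ball x (r.1:ℝ), g y = 0 := by
    intro r
    have hr0 : (0:ℝ) < (r.1:ℝ) := by exact_mod_cast r.2
    have := iSup_eq_zero.mp h0 r
    rcases mul_eq_zero.mp this with h' | h'
    · exfalso
      rw [ENNReal.inv_eq_zero] at h'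
      exact vol_ball_ne_top x _ h'
    · exact h'
  have hzero : ∫⁻ y, g y = 0 := by
    have hcov : (univ : Set E3) ⊆ ⋃ n : ℕ, ball x ((n:ℝ)+1) := by
      intro y _
      obtain ⟨n, hn⟩ := exists_nat_gt (dist y x)
      exact mem_iUnion.mpr ⟨n, mem_ball.mpr (by linarith)⟩
    have hterm : ∀ n : ℕ, ∫⁻ y in ball x ((n:ℝ)+1), g y = 0 := by
      intro n
      have hsub : ball x ((n:ℝ)+1) ⊆ ball x (((n+1 : ℚ)):ℝ) := by
        apply ball_subset_ball
        push_cast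
        exact le_refl _
      refine le_antisymm ?_ zero_le
      calc ∫⁻ y in ball x ((n:ℝ)+1), g y
          ≤ ∫⁻ y in ball x (((n+1:ℚ)):ℝ), g y := lintegral_mono_set hsub
        _ = 0 := hball ⟨n+1, by positivity⟩
    have hle : ∫⁻ y, g y ≤ ∑' n : ℕ, ∫⁻ y in ball x ((n:ℝ)+1), g y := by
      calc ∫⁻ y, g y = ∫⁻ y in univ, g y := (setLIntegral_univ _).symm
        _ ≤ ∫⁻ y in ⋃ n : ℕ, ball x ((n:ℝ)+1), g y := lintegral_mono_set hcov
        _ ≤ _ := lintegral_iUnion_le _ _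
    simp only [hterm, tsum_zero] at hle
    exact le_antisymm hle zero_le
  have hae : g =ᵐ[volume] 0 := (lintegral_eq_zero_iff hg).mp hzero
  calc ∫⁻ y, g y ^ p = ∫⁻ y, (0:ℝ≥0∞) := by
        apply lintegral_congr_ae
        filter_upwards [hae] with y hy
        rw [hy]
        exact ENNReal.zero_rpow_of_pos hp0
    _ = 0 := lintegral_zero

lemma interp_mul {A : ℝ≥0∞} (B : ℝ≥0∞) (hA0 : A ≠ 0) (hAt : A ≠ ∞) {s : ℝ} (hs : 0 ≤ s) :
    A * (B / A)^s = A^(1-s) * B^s := by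
  rw [ENNReal.div_rpow_of_nonneg _ _ hs, div_eq_mul_inv,
    show (1:ℝ)-s = 1 + (-s) by ring, ENNReal.rpow_add 1 (-s) hA0 hAt,
    ENNReal.rpow_one, ENNReal.rpow_neg]
  ring

/-- The Hedberg constant. -/
def CH (p : ℝ) : ℝ≥0∞ :=
  32 * c0 + (8 * c0 * (1 - ENNReal.ofReal ((2:ℝ)^(3 - Real.conjExponent p)))⁻¹)
    ^ (1 / Real.conjExponent p)

lemma geo_ne_top {s : ℝ} (hs : 3 < s) :
    (1 - ENNReal.ofReal ((2:ℝ)^(3-s)))⁻¹ ≠ ∞ := by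
  rw [Ne, ENNReal.inv_eq_top, tsub_eq_zero_iff_le]
  intro hle
  have h1 : (2:ℝ)^(3-s) < 1 :=
    Real.rpow_lt_one_of_one_lt_of_neg (by norm_num) (by linarith)
  have : ENNReal.ofReal ((2:ℝ)^(3-s)) < 1 := by
    rw [← ENNReal.ofReal_one]
    exact ENNReal.ofReal_lt_ofReal_iff_of_nonneg (by positivity) |>.mpr h1
  exact absurd (lt_of_le_of_lt hle this) (lt_irrefl _)

lemma CH_ne_top {p : ℝ} (hp1 : 1 < p) (hp'3 : 3 < Real.conjExponent p) : CH p ≠ ∞ := by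
  apply ENNReal.add_ne_top.mpr
  constructor
  · exact ENNReal.mul_ne_top (by norm_num) c0_ne_top
  · apply ENNReal.rpow_ne_top_of_nonneg (by positivity)
    exact ENNReal.mul_ne_top (ENNReal.mul_ne_top (by norm_num) c0_ne_top) (geo_ne_top hp'3)

lemma CH_ne_zero (p : ℝ) : CH p ≠ 0 := by
  intro h
  rw [CH, add_eq_zero] at h
  have := h.1
  rcases mul_eq_zero.mp this with h' | h'
  · norm_num at h'
  · exact c0_pos.ne' h'

/-- Hedberg's pointwise inequality. -/
lemma hedberg (g : E3 → ℝ≥0∞) (hg : Measurable g) {p : ℝ} (hp1 : 1 < p) (hp32 : p < 3/2)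
    (hB0 : ∫⁻ y, g y ^ p ≠ 0) (hBtop : ∫⁻ y, g y ^ p ≠ ∞) (x : E3) :
    ∫⁻ y, g y * ker x y
      ≤ CH p * (maxFn g x)^(1 - 2*p/3) * ((∫⁻ y, g y ^ p)^(1/p))^(2*p/3) := by
  have hp0 : (0:ℝ) < p := by linarith
  set p' : ℝ := Real.conjExponent p with hp'def
  have hpq : p.HolderConjugate p' := Real.HolderConjugate.conjExponent hp1
  have hp'eq : p' = p/(p-1) := rfl
  have hp'3 : 3 < p' := by
    rw [hp'eq, lt_div_iff₀ (by linarith)]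
    linarith
  have hp'0 : (0:ℝ) < p' := by linarith
  set θ : ℝ := 1 - 2*p/3 with hθdef
  have hθ0 : 0 < θ := by rw [hθdef]; linarith
  have hθ1 : θ < 1 := by rw [hθdef]; linarith
  set B : ℝ≥0∞ := (∫⁻ y, g y ^ p)^(1/p) with hBdef
  have hB0' : B ≠ 0 := by
    rw [hBdef, Ne, ENNReal.rpow_eq_zero_iff]
    push_neg
    exact ⟨fun h => absurd h hB0, fun h => absurd h hBtop⟩
  have hBt : B ≠ ∞ := by
    rw [hBdef, Ne, ENNReal.rpow_eq_top_iff]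
    push_neg
    exact ⟨fun h => absurd h hB0, fun h => absurd h hBtop⟩
  set A : ℝ≥0∞ := maxFn g x with hAdef
  have hA0 : A ≠ 0 := maxFn_ne_zero g hg hp0 hB0 x
  rcases eq_or_ne A ∞ with hAt | hAt
  · -- maximal function infinite: RHS is ⊤
    have : CH p * A^θ * B^(2*p/3) = ∞ := by
      rw [hAt, ENNReal.top_rpow_of_pos hθ0, ENNReal.mul_top (CH_ne_zero p),
        ENNReal.top_mul]
      rw [Ne, ENNReal.rpow_eq_zero_iff]
      push_neg
      exact ⟨fun h => absurd h hB0', fun h => absurd h hBt⟩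
    rw [this]
    exact le_top
  · -- main case
    set ρ : ℝ≥0∞ := B / A with hρdef
    have hρ0 : ρ ≠ 0 := by
      rw [hρdef, Ne, ENNReal.div_eq_zero_iff]
      push_neg
      exact ⟨hB0', hAt⟩
    have hρt : ρ ≠ ∞ := by
      rw [hρdef, Ne, ENNReal.div_eq_top]
      push_neg
      exact ⟨fun _ => hA0, fun h => absurd h hBt⟩
    have hρr : (0:ℝ) < ρ.toReal := ENNReal.toReal_pos hρ0 hρt
    set R : ℝ := ρ.toReal ^ (p/3) with hRdef
    have hR : 0 < R := Real.rpow_pos_of_pos hρr _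
    have hofR : ∀ c : ℝ, ENNReal.ofReal (ρ.toReal ^ c) = ρ ^ c := by
      intro c
      rw [ENNReal.toReal_rpow, ENNReal.ofReal_toReal]
      rw [Ne, ENNReal.rpow_eq_top_iff]
      push_neg
      exact ⟨fun h => absurd h hρ0, fun h => absurd h hρt⟩
    -- near estimate
    have hnear : ∫⁻ y in ball x R, g y * ker x y ≤ 32 * c0 * (A^θ * B^(2*p/3)) := by
      refine le_trans (near_bound g x hR) ?_
      have hR2 : ENNReal.ofReal (R^2) = ρ ^ (2*p/3) := by
        rw [hRdef, ← Real.rpow_natCast (ρ.toReal ^ (p/3)) 2,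
          ← Real.rpow_mul ENNReal.toReal_nonneg]
        rw [show p/3 * ((2:ℕ):ℝ) = 2*p/3 by push_cast; ring]
        exact hofR _
      rw [hR2, mul_assoc, mul_comm (ρ ^ (2*p/3)) A, hρdef,
        interp_mul B hA0 hAt (by linarith : (0:ℝ) ≤ 2*p/3)]
    -- far estimate
    have hfar : ∫⁻ y in (ball x R)ᶜ, g y * ker x y
        ≤ (8 * c0 * (1 - ENNReal.ofReal ((2:ℝ)^(3-p')))⁻¹)^(1/p') * (A^θ * B^(2*p/3)) := by
      refine le_trans (far_bound g hg x hR hpq hp'3) ?_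
      have h1 : p - 1 ≠ 0 := by linarith
      have h2 : p ≠ 0 := by linarith
      have hexp : (3 - p') * (1/p') = 2 - 3/p := by
        rw [hp'eq]
        field_simp
        ring
      have hexp2 : (p/3) * (2 - 3/p) = -θ := by
        rw [hθdef]
        field_simp
        ring
      have hRfar : ENNReal.ofReal (R^(3-p')) ^ (1/p') = (A/B) ^ θ := by
        rw [ENNReal.ofReal_rpow_of_pos (Real.rpow_pos_of_pos hR _),
          ← Real.rpow_mul hR.le, hexp, hRdef, ← Real.rpow_mul ENNReal.toReal_nonneg, hexp2,
          hofR, ENNReal.rpow_neg, ← ENNReal.inv_rpow, hρdef,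
          ENNReal.inv_div (Or.inr hBt) (Or.inr hB0')]
      rw [ENNReal.mul_rpow_of_nonneg _ _ (by positivity : (0:ℝ) ≤ 1/p'), hRfar]
      rw [mul_comm ((∫⁻ y, g y ^ p)^(1/p)), mul_assoc]
      apply mul_le_mul_right
      rw [mul_comm ((A/B)^θ) B, interp_mul A hB0' hBt hθ0.le,
        show (1:ℝ) - θ = 2*p/3 by rw [hθdef]; ring]
      exact le_of_eq (mul_comm _ _)
    calc ∫⁻ y, g y * ker x y
        = (∫⁻ y in ball x R, g y * ker x y) + ∫⁻ y in (ball x R)ᶜ, g y * ker x y :=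
          (lintegral_add_compl _ measurableSet_ball).symm
      _ ≤ 32 * c0 * (A^θ * B^(2*p/3))
          + (8 * c0 * (1 - ENNReal.ofReal ((2:ℝ)^(3-p')))⁻¹)^(1/p') * (A^θ * B^(2*p/3)) :=
          add_le_add hnear hfar
      _ = CH p * A^θ * B^(2*p/3) := by
          rw [CH, ← hp'def, add_mul, mul_assoc]
          ring

end HLS

open HLS

theorem hls_convolution (p q : ℝ) (hp : 1 < p) (hq : 1 < q)
    (hpq : 1 / p + 1 / 3 = 1 + 1 / q) :
    ∃ N : ℝ, 0 < N ∧ ∀ f : E3 → ℝ, MemLp f (ENNReal.ofReal p) volume →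
      eLpNorm (fun x : E3 => ∫ y : E3, f y / ‖x - y‖) (ENNReal.ofReal q) volume
        ≤ ENNReal.ofReal N * eLpNorm f (ENNReal.ofReal p) volume := by
  have hp0 : (0:ℝ) < p := by linarith
  have hq0 : (0:ℝ) < q := by linarith
  have hp32 : p < 3/2 := by
    have h1q : 0 < 1/q := by positivity
    have h23 : 2/3 < 1/p := by linarith
    have hmul := mul_lt_mul_of_pos_right h23 hp0
    rw [one_div, inv_mul_cancel₀ hp0.ne'] at hmul
    linarith
  have hθq : (1 - 2*p/3) * q = p := by
    have h : 1/q = 1/p - 2/3 := by linarith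
    have hq' : q ≠ 0 := hq0.ne'
    have hp' : p ≠ 0 := hp0.ne'
    field_simp at h
    nlinarith [h]
  have hpq2 : 2*p/3 + p/q = 1 := by
    have hq' : q ≠ 0 := hq0.ne'
    have hp' : p ≠ 0 := hp0.ne'
    have h : 1/q = 1/p - 2/3 := by linarith
    field_simp at h ⊢
    nlinarith [h]
  have hp'3 : 3 < Real.conjExponent p := by
    rw [Real.conjExponent, lt_div_iff₀ (by linarith)]
    linarith
  set Ctot : ℝ≥0∞ := CH p * (Kp p)^(1/q) with hCtot
  have hCtot_ne_top : Ctot ≠ ∞ := ENNReal.mul_ne_top (CH_ne_top hp hp'3)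
    (ENNReal.rpow_ne_top_of_nonneg (by positivity) (Kp_ne_top hp))
  refine ⟨Ctot.toReal + 1, by positivity, ?_⟩
  intro f hf
  -- measurable version of ‖f‖
  set f₀ := hf.1.mk f with hf₀def
  have hff₀ : f =ᵐ[volume] f₀ := hf.1.ae_eq_mk
  set g : E3 → ℝ≥0∞ := fun y => (‖f₀ y‖₊ : ℝ≥0∞) with hgdef
  have hgm : Measurable g := hf.1.stronglyMeasurable_mk.measurable.nnnorm.coe_nnreal_ennreal
  have hgae : (fun y => ((‖f y‖₊ : ℝ≥0∞))) =ᵐ[volume] g := by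
    filter_upwards [hff₀] with y hy
    rw [hgdef]
    simp only
    rw [hy]
  -- identify the Lp norm
  have hBeq : eLpNorm f (ENNReal.ofReal p) volume = (∫⁻ y, g y ^ p)^(1/p) := by
    rw [eLpNorm_eq_eLpNorm' (by simp [ENNReal.ofReal_eq_zero, not_le, hp0]) ofReal_ne_top,
      ENNReal.toReal_ofReal hp0.le]
    unfold eLpNorm'
    congr 1
    apply lintegral_congr_ae
    filter_upwards [hgae] with y hy
    rw [← hy]; rfl
  have hBt : eLpNorm f (ENNReal.ofReal p) volume ≠ ∞ := hf.2.ne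
  set B : ℝ≥0∞ := eLpNorm f (ENNReal.ofReal p) volume with hBdef
  have hIgt : (∫⁻ y, g y ^ p) ≠ ∞ := by
    intro htop
    rw [hBeq, htop, ENNReal.top_rpow_of_pos (by positivity)] at hBt
    exact hBt rfl
  -- pointwise domination of the convolution
  have hpt : ∀ x : E3, ((‖∫ y : E3, f y / ‖x - y‖‖₊ : ℝ≥0∞))
      ≤ ∫⁻ y, g y * ker x y := by
    intro x
    calc ((‖∫ y : E3, f y / ‖x - y‖‖₊ : ℝ≥0∞))
        ≤ ∫⁻ y, ((‖f y / ‖x - y‖‖₊ : ℝ≥0∞)) := enorm_integral_le_lintegral_enorm _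
      _ ≤ ∫⁻ y, ((‖f y‖₊ : ℝ≥0∞)) * ker x y := by
          apply lintegral_mono
          intro y
          show ((‖f y / ‖x - y‖‖₊ : ℝ≥0∞)) ≤ ((‖f y‖₊ : ℝ≥0∞)) * ker x y
          by_cases hxy : x - y = 0
          · rw [show ‖x - y‖ = 0 by rw [hxy, norm_zero]]
            simp
          · have hne : ‖‖x - y‖‖₊ ≠ 0 := by
              simp [nnnorm_norm, hxy]
            rw [nnnorm_div, ENNReal.coe_div hne, nnnorm_norm, ker, div_eq_mul_inv]
      _ = ∫⁻ y, g y * ker x y := by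
          apply lintegral_congr_ae
          filter_upwards [hgae] with y hy
          rw [hy]
  by_cases hB0 : (∫⁻ y, g y ^ p) = 0
  · -- f vanishes a.e.
    have hg0 : g =ᵐ[volume] 0 := by
      have := (lintegral_eq_zero_iff (hgm.pow_const p)).mp hB0
      filter_upwards [this] with y hy
      simp only [Pi.zero_apply] at hy ⊢
      rcases (ENNReal.rpow_eq_zero_iff.mp hy) with ⟨h1, _⟩ | ⟨h1, h2⟩
      · exact h1
      · exact absurd h2 (by simp [not_lt, hp0.le])
    have hconv0 : ∀ x : E3, (∫ y : E3, f y / ‖x - y‖) = 0 := by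
      intro x
      have h0 : ∫⁻ y, g y * ker x y = 0 := by
        rw [← lintegral_zero]
        apply lintegral_congr_ae
        filter_upwards [hg0] with y hy
        rw [hy]
        simp
      have := hpt x
      rw [h0, le_zero_iff] at this
      simpa using this
    have : (fun x : E3 => ∫ y : E3, f y / ‖x - y‖) = fun _ => (0:ℝ) := funext hconv0
    rw [this]
    rw [show (fun _ : E3 => (0:ℝ)) = (0 : E3 → ℝ) from rfl, eLpNorm_zero]
    exact zero_le
  · -- main case
    have hhed := fun x => hedberg g hgm hp hp32 hB0 hIgt x
    have hqne : ENNReal.ofReal q ≠ 0 := by simp [ENNReal.ofReal_eq_zero, not_le, hq0]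
    rw [eLpNorm_eq_eLpNorm' hqne ofReal_ne_top, ENNReal.toReal_ofReal hq0.le]
    unfold eLpNorm'
    have hθ0 : (0:ℝ) < 1 - 2*p/3 := by linarith
    have key : ∫⁻ x, ((‖∫ y : E3, f y / ‖x - y‖‖₊ : ℝ≥0∞)) ^ q
        ≤ (CH p)^q * (B^(2*p/3))^q * (Kp p * ∫⁻ y, g y ^ p) := by
      have hBpow : ((∫⁻ y, g y ^ p)^(1/p))^(2*p/3) = B^(2*p/3) := by rw [← hBeq]
      calc ∫⁻ x, ((‖∫ y : E3, f y / ‖x - y‖‖₊ : ℝ≥0∞)) ^ q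
          ≤ ∫⁻ x, (CH p * (maxFn g x)^(1 - 2*p/3) * B^(2*p/3)) ^ q := by
            apply lintegral_mono
            intro x
            apply ENNReal.rpow_le_rpow _ hq0.le
            refine le_trans (hpt x) (le_trans (hhed x) ?_)
            rw [hBpow]
        _ = ∫⁻ x, ((CH p)^q * (B^(2*p/3))^q) * ((maxFn g x)^(1 - 2*p/3))^q := by
            apply lintegral_congr
            intro x
            rw [ENNReal.mul_rpow_of_nonneg _ _ hq0.le, ENNReal.mul_rpow_of_nonneg _ _ hq0.le]
            ring
        _ = ((CH p)^q * (B^(2*p/3))^q) * ∫⁻ x, (maxFn g x)^p := by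
            rw [lintegral_const_mul' _ _ (ENNReal.mul_ne_top
              (ENNReal.rpow_ne_top_of_nonneg hq0.le (CH_ne_top hp hp'3))
              (ENNReal.rpow_ne_top_of_nonneg hq0.le
                (ENNReal.rpow_ne_top_of_nonneg (by positivity) hBt)))]
            congr 1
            apply lintegral_congr
            intro x
            rw [← ENNReal.rpow_mul, hθq]
        _ ≤ ((CH p)^q * (B^(2*p/3))^q) * (Kp p * ∫⁻ y, g y ^ p) :=
            mul_le_mul_right (lintegral_maxFn_rpow_le g hgm hp) _
    calc (∫⁻ x, ((‖∫ y : E3, f y / ‖x - y‖‖₊ : ℝ≥0∞)) ^ q) ^ (1/q)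
        ≤ ((CH p)^q * (B^(2*p/3))^q * (Kp p * ∫⁻ y, g y ^ p)) ^ (1/q) :=
          ENNReal.rpow_le_rpow key (by positivity)
      _ = CH p * (Kp p)^(1/q) * B := by
          rw [ENNReal.mul_rpow_of_nonneg _ _ (by positivity : (0:ℝ) ≤ 1/q),
            ENNReal.mul_rpow_of_nonneg _ _ (by positivity : (0:ℝ) ≤ 1/q),
            ENNReal.mul_rpow_of_nonneg _ _ (by positivity : (0:ℝ) ≤ 1/q)]
          rw [← ENNReal.rpow_mul (CH p), mul_one_div_cancel hq0.ne', ENNReal.rpow_one]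
          rw [← ENNReal.rpow_mul (B^(2*p/3)), mul_one_div_cancel hq0.ne', ENNReal.rpow_one]
          have hIB : (∫⁻ y, g y ^ p) ^ (1/q) = B ^ (p/q) := by
            rw [hBeq, ← ENNReal.rpow_mul]
            congr 1
            field_simp
          rw [hIB]
          calc CH p * B^(2*p/3) * (Kp p ^ (1/q) * B^(p/q))
              = CH p * Kp p ^ (1/q) * (B^(2*p/3) * B^(p/q)) := by ring
            _ = CH p * Kp p ^ (1/q) * B := by
                rw [← ENNReal.rpow_add_of_nonneg (2*p/3) (p/q) (by positivity) (by positivity),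
                  hpq2, ENNReal.rpow_one]
      _ ≤ ENNReal.ofReal (Ctot.toReal + 1) * B := by
          apply mul_le_mul_left
          rw [← hCtot]
          calc Ctot = ENNReal.ofReal Ctot.toReal := (ENNReal.ofReal_toReal hCtot_ne_top).symm
            _ ≤ ENNReal.ofReal (Ctot.toReal + 1) := ENNReal.ofReal_le_ofReal (by linarith)
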